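/- Let $S'$ be an infinite semigroup with $S' + S'$ finite. Then $S'$ contains an injective sequence $(a_n)$ such that $FS_{\ge 2}(a_n) := \{a_{i_1}+\dots+a_{i_m} : m \ge 2, i_1 < \dots < i_m\}$ is finite; consequently the family of proper IP sets of $S'$ is not partition regular. -/

import Mathlib

/-- The ordered sum `a_{i_1} + ⋯ + a_{i_m}` over a finite index set
`F = {i_1 < ⋯ < i_m}` (junk value `a 0` if `F = ∅`). -/
def ordsum {S : Type*} [AddSemigroup S] (a : ℕ → S) (F : Finset ℕ) : S :=
  match F.sort (· ≤ ·) with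
  | [] => a 0
  | i :: l => l.foldl (fun s j => s + a j) (a i)

/-- `F < G`: every element of `F` is smaller than every element of `G`. -/
def FinsetLT (F G : Finset ℕ) : Prop := ∀ i ∈ F, ∀ j ∈ G, i < j

/-- `FS(a_1, a_2, …)`: the set of all finite ordered sums of the sequence `a`. -/
def FSset {S : Type*} [AddSemigroup S] (a : ℕ → S) : Set S :=
  {s | ∃ F : Finset ℕ, F.Nonempty ∧ ordsum a F = s}

/-- `FS(a_n, a_{n+1}, …)`: finite ordered sums with all indices `≥ n`. -/
def FStail {S : Type*} [AddSemigroup S] (a : ℕ → S) (n : ℕ) : Set S :=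
  {s | ∃ F : Finset ℕ, F.Nonempty ∧ (∀ i ∈ F, n ≤ i) ∧ ordsum a F = s}

/-- A sequence is proper if `a_{F₁} ≠ a_{F₂}` whenever `F₁ < F₂`. -/
def IsProperSeq {S : Type*} [AddSemigroup S] (a : ℕ → S) : Prop :=
  ∀ F G : Finset ℕ, F.Nonempty → G.Nonempty → FinsetLT F G →
    ordsum a F ≠ ordsum a G

/-- `b` is a sumsequence of `a`: `b_k = a_{F_k}` for finite index sets `F₁ < F₂ < ⋯`. -/
def IsSumseq {S : Type*} [AddSemigroup S] (a b : ℕ → S) : Prop :=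
  ∃ F : ℕ → Finset ℕ, (∀ k, (F k).Nonempty) ∧
    (∀ k, FinsetLT (F k) (F (k + 1))) ∧ (∀ k, b k = ordsum a (F k))


/-- A proper IP set: contains `FS(b)` for an injective sequence `b`. -/
def IsProperIP {S : Type*} [AddSemigroup S] (A : Set S) : Prop :=
  ∃ b : ℕ → S, Function.Injective b ∧ FSset b ⊆ A

/-- Partition regularity of the family of proper IP sets of `S`. -/
def ProperIPPartReg (S : Type*) [AddSemigroup S] : Prop :=
  ∀ A : Set S, IsProperIP A → ∀ (k : ℕ) (c : S → Fin k),
    ∃ i : Fin k, IsProperIP {s ∈ A | c s = i}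

/-- `FS(b_0, …, b_{n-1})`: ordered sums over nonempty `F ⊆ {0, …, n-1}`. -/
def FSfin {S : Type*} [AddSemigroup S] (a : ℕ → S) (n : ℕ) : Set S :=
  {s | ∃ F : Finset ℕ, F.Nonempty ∧ F ⊆ Finset.range n ∧ ordsum a F = s}

/-- `FS_{≥2}(a)`: ordered sums with at least two summands. -/
def FS2set {S : Type*} [AddSemigroup S] (a : ℕ → S) : Set S :=
  {s | ∃ F : Finset ℕ, 2 ≤ F.card ∧ ordsum a F = s}

section Aux
variable {S : Type*} [AddSemigroup S]

lemma foldl_sum_aux (a : ℕ → S) :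
    ∀ (l : List ℕ) (s : S), (∃ u v : S, l.foldl (fun s j => s + a j) s = u + v) ∨
      l.foldl (fun s j => s + a j) s = s := by
  intro l
  induction l with
  | nil => intro s; exact Or.inr rfl
  | cons j l ih =>
    intro s
    rcases ih (s + a j) with h | h
    · exact Or.inl h
    · exact Or.inl ⟨s, a j, h⟩

lemma ordsum_singleton (a : ℕ → S) (i : ℕ) : ordsum a {i} = a i := by
  unfold ordsum
  rw [Finset.sort_singleton]
  rfl

lemma ordsum_pair (a : ℕ → S) {i j : ℕ} (hij : i < j) :
    ordsum a {i, j} = a i + a j := by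
  unfold ordsum
  have h1 : Finset.sort ({i, j} : Finset ℕ) (· ≤ ·) = i :: Finset.sort {j} (· ≤ ·) := by
    apply Finset.sort_insert
    · intro b hb; simp at hb; omega
    · simp; omega
  rw [h1, Finset.sort_singleton]
  rfl

lemma fs2_subset_sumset (a : ℕ → S) :
    FS2set a ⊆ {x : S | ∃ u v : S, x = u + v} := by
  rintro x ⟨F, hF, hx⟩
  have hlen : 2 ≤ (Finset.sort F (· ≤ ·)).length := by
    rwa [Finset.length_sort]
  match hl : Finset.sort F (· ≤ ·) with
  | [] => rw [hl] at hlen; simp at hlen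
  | [i] => rw [hl] at hlen; simp at hlen
  | i :: j :: l =>
    have : ordsum a F = (j :: l).foldl (fun s j => s + a j) (a i) := by
      unfold ordsum; rw [hl]
    rw [this] at hx
    rcases foldl_sum_aux a l (a i + a j) with ⟨u, v, huv⟩ | heq
    · exact ⟨u, v, by rw [← hx]; simpa using huv⟩
    · exact ⟨a i, a j, by rw [← hx]; simpa using heq⟩

lemma range_subset_FSset (b : ℕ → S) : Set.range b ⊆ FSset b := by
  rintro x ⟨k, rfl⟩
  exact ⟨{k}, Finset.singleton_nonempty k, ordsum_singleton b k⟩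

lemma not_properIP_of_finite {A : Set S} (hA : A.Finite) : ¬ IsProperIP A := by
  rintro ⟨b, hb, hsub⟩
  have : (Set.range b).Finite := hA.subset ((range_subset_FSset b).trans hsub)
  exact Set.infinite_range_of_injective hb this

end Aux

theorem stmt15 {S : Type*} [AddSemigroup S] [Infinite S]
    (h : {x : S | ∃ a b : S, x = a + b}.Finite) :
    (∃ a : ℕ → S, Function.Injective a ∧ (FS2set a).Finite) ∧
      ¬ ProperIPPartReg S := by
  classical
  let a : ℕ → S := fun n => Infinite.natEmbedding S n
  have ha : Function.Injective a := fun m n hmn => (Infinite.natEmbedding S).injective hmn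
  have hfin : (FS2set a).Finite := h.subset (fs2_subset_sumset a)
  refine ⟨⟨a, ha, hfin⟩, ?_⟩
  intro hreg
  have hIP : IsProperIP (FSset a) := ⟨a, ha, subset_rfl⟩
  obtain ⟨i, hIPi⟩ := hreg (FSset a) hIP 2
    (fun s => if s ∈ FS2set a then 1 else 0)
  fin_cases i
  · obtain ⟨b, hb, hsub⟩ := hIPi
    have hbk : ∀ k, ∃ m, b k = a m := by
      intro k
      have hk := hsub (range_subset_FSset b ⟨k, rfl⟩)
      obtain ⟨⟨F, hFne, hFo⟩, hc⟩ := hk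
      have hnot : b k ∉ FS2set a := by
        intro hmem
        simp only [if_pos hmem] at hc
        exact one_ne_zero hc
      have hcard : F.card = 1 := by
        by_contra hne
        have h2 : 2 ≤ F.card := by
          have := hFne.card_pos; omega
        exact hnot ⟨F, h2, hFo⟩
      obtain ⟨m, rfl⟩ := Finset.card_eq_one.mp hcard
      exact ⟨m, by rw [← hFo, ordsum_singleton]⟩
    choose m hm using hbk
    have hminj : Function.Injective m := fun k l hkl => hb (by rw [hm, hm, hkl])
    have hex : ∃ l, m 0 < m l := by
      by_contra hc
      push_neg at hc
      have hfr : (Set.range m).Finite :=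
        (Set.finite_Iic (m 0)).subset (by rintro x ⟨k, rfl⟩; exact hc k)
      exact Set.infinite_range_of_injective hminj hfr
    obtain ⟨l, hl⟩ := hex
    have hl0 : 0 < l := by
      rcases Nat.eq_zero_or_pos l with rfl | hp
      · omega
      · exact hp
    have h1 : ordsum b {0, l} = b 0 + b l := ordsum_pair b hl0
    have hmem := hsub ⟨{0, l}, ⟨0, by simp⟩, h1⟩
    have h2 : b 0 + b l ∈ FS2set a := by
      refine ⟨{m 0, m l}, ?_, ?_⟩
      · rw [Finset.card_insert_of_notMem (by simp; omega), Finset.card_singleton]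
      · rw [ordsum_pair a hl, ← hm, ← hm]
    have hc2 := hmem.2
    simp only [if_pos h2] at hc2
    exact one_ne_zero hc2
  · refine not_properIP_of_finite (hfin.subset ?_) hIPi
    rintro s ⟨hsA, hc⟩
    by_contra hns
    simp only [if_neg hns] at hc
    exact (by decide : ¬ ((0 : Fin 2) = 1)) hc
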